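/- In the mixed-policy setup, suppose for each δ ∈ (0,1] a stationary distribution π^δ of P^δ is chosen such that π^δ i → π i for every i as δ → 0⁺, and such that (J^δ_μ - J_μ)/δ converges to a finite limit as δ → 0⁺, where J^δ_μ = ∑_i π^δ i * r^δ i. Then the one-sided limit lim_{δ→0⁺} (J^δ_{μ,σ} - J_{μ,σ})/δ exists and equals ∑_i π i * ( ∑_j (P' i j - P i j) * g j + r' i - β*(r' i - J_μ)^2 - r i + β*(r i - J_μ)^2 ). -/

import Mathlib

open Filter Topology

/-- Performance derivative formula in the mixed policy space (Lemma 2). -/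
theorem mean_variance_mixed_policy_derivative
    (S : ℕ) (hS : 1 ≤ S)
    (P P' : Matrix (Fin S) (Fin S) ℝ)
    (hP0 : ∀ i j, 0 ≤ P i j) (hP1 : ∀ i, ∑ j, P i j = 1)
    (hP'0 : ∀ i j, 0 ≤ P' i j) (hP'1 : ∀ i, ∑ j, P' i j = 1)
    (π : Fin S → ℝ)
    (hπ0 : ∀ i, 0 ≤ π i) (hπ1 : ∑ i, π i = 1)
    (hπstat : ∀ j, ∑ i, π i * P i j = π j)
    (r r' : Fin S → ℝ) (β : ℝ)
    (Jmu Jms : ℝ)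
    (hJmu : Jmu = ∑ i, π i * r i)
    (hJms : Jms = Jmu - β * ∑ i, π i * (r i - Jmu) ^ 2)
    (g : Fin S → ℝ)
    (hg : ∀ i, g i = r i - β * (r i - Jmu) ^ 2 - Jms + ∑ j, P i j * g j)
    (πδ : ℝ → Fin S → ℝ)
    (hπδ0 : ∀ δ ∈ Set.Ioc (0 : ℝ) 1, ∀ i, 0 ≤ πδ δ i)
    (hπδ1 : ∀ δ ∈ Set.Ioc (0 : ℝ) 1, ∑ i, πδ δ i = 1)
    (hπδstat : ∀ δ ∈ Set.Ioc (0 : ℝ) 1,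
      ∀ j, ∑ i, πδ δ i * (P i j + δ * (P' i j - P i j)) = πδ δ j)
    (hπδtend : ∀ i, Tendsto (fun δ => πδ δ i) (𝓝[>] (0 : ℝ)) (𝓝 (π i)))
    (Jδmu : ℝ → ℝ)
    (hJδmu : ∀ δ, Jδmu δ = ∑ i, πδ δ i * (r i + δ * (r' i - r i)))
    (L : ℝ)
    (hL : Tendsto (fun δ => (Jδmu δ - Jmu) / δ) (𝓝[>] (0 : ℝ)) (𝓝 L))
    (Jδms : ℝ → ℝ)
    (hJδms : ∀ δ, Jδms δ = ∑ i, πδ δ i *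
      ((1 - δ) * (r i - β * (r i - Jδmu δ) ^ 2)
        + δ * (r' i - β * (r' i - Jδmu δ) ^ 2))) :
    Tendsto (fun δ => (Jδms δ - Jms) / δ) (𝓝[>] (0 : ℝ))
      (𝓝 (∑ i, π i * ((∑ j, (P' i j - P i j) * g j)
        + r' i - β * (r' i - Jmu) ^ 2 - r i + β * (r i - Jmu) ^ 2))) := by
  have hIoc : Set.Ioc (0:ℝ) 1 ∈ 𝓝[>] (0:ℝ) :=
    Ioc_mem_nhdsGT_of_mem (by constructor <;> norm_num)
  have hδid : Tendsto (fun δ : ℝ => δ) (𝓝[>] (0:ℝ)) (𝓝 0) :=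
    tendsto_id.mono_left nhdsWithin_le_nhds
  -- Jδmu tends to Jmu
  have hJtend : Tendsto Jδmu (𝓝[>] (0:ℝ)) (𝓝 Jmu) := by
    have h1 : Tendsto (fun δ => (Jδmu δ - Jmu) / δ * δ + Jmu) (𝓝[>] (0:ℝ))
        (𝓝 (L * 0 + Jmu)) := (hL.mul hδid).add tendsto_const_nhds
    rw [mul_zero, zero_add] at h1
    refine h1.congr' ?_
    filter_upwards [self_mem_nhdsWithin] with δ (hδ : (0:ℝ) < δ)
    field_simp
    ring
  set A : ℝ → ℝ := fun δ => ∑ i, πδ δ i * (2 * r i - Jδmu δ - Jmu) with hA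
  set B : ℝ → ℝ := fun δ => ∑ i, πδ δ i *
      ((r' i - β * (r' i - Jδmu δ) ^ 2) - (r i - β * (r i - Jδmu δ) ^ 2)) with hB
  set C : ℝ → ℝ := fun δ => ∑ i, πδ δ i * (∑ j, (P' i j - P i j) * g j) with hC
  -- the key algebraic identity
  have key : ∀ δ ∈ Set.Ioc (0:ℝ) 1,
      Jδms δ - Jms = β * (Jδmu δ - Jmu) * A δ + δ * (B δ + C δ) := by
    intro δ hδ
    have hst := hπδstat δ hδ
    have h1 := hπδ1 δ hδ
    have e1 : ∀ j, ∑ i, πδ δ i * P i j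
        = πδ δ j - δ * ∑ i, πδ δ i * (P' i j - P i j) := by
      intro j
      have h := hst j
      have h2 : ∑ i, (πδ δ i * P i j + δ * (πδ δ i * (P' i j - P i j))) = πδ δ j := by
        rw [← h]; exact Finset.sum_congr rfl fun i _ => by ring
      rw [Finset.sum_add_distrib, ← Finset.mul_sum] at h2
      linarith
    have hsum1 : ∑ i, πδ δ i * ∑ j, P i j * g j
        = (∑ i, πδ δ i * g i) - δ * C δ := by
      have swap1 : ∑ i, πδ δ i * ∑ j, P i j * g j
          = ∑ j, (∑ i, πδ δ i * P i j) * g j := by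
        simp_rw [Finset.mul_sum, Finset.sum_mul]
        rw [Finset.sum_comm]
        exact Finset.sum_congr rfl fun j _ => Finset.sum_congr rfl fun i _ => by ring
      have swap2 : C δ = ∑ j, (∑ i, πδ δ i * (P' i j - P i j)) * g j := by
        rw [hC]
        simp_rw [Finset.mul_sum, Finset.sum_mul]
        rw [Finset.sum_comm]
        exact Finset.sum_congr rfl fun j _ => Finset.sum_congr rfl fun i _ => by ring
      rw [swap1, swap2, Finset.mul_sum, ← Finset.sum_sub_distrib]
      exact Finset.sum_congr rfl fun j _ => by rw [e1 j]; ring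
    have hpt : ∀ i, ((1 - δ) * (r i - β * (r i - Jδmu δ) ^ 2)
          + δ * (r' i - β * (r' i - Jδmu δ) ^ 2)) - Jms
        = β * (Jδmu δ - Jmu) * (2 * r i - Jδmu δ - Jmu)
          + δ * ((r' i - β * (r' i - Jδmu δ) ^ 2) - (r i - β * (r i - Jδmu δ) ^ 2))
          + (g i - ∑ j, P i j * g j) := fun i => by linear_combination -hg i
    calc Jδms δ - Jms
        = ∑ i, (πδ δ i * ((1 - δ) * (r i - β * (r i - Jδmu δ) ^ 2)
            + δ * (r' i - β * (r' i - Jδmu δ) ^ 2)) - πδ δ i * Jms) := by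
          have hJmsum : Jms = ∑ i, πδ δ i * Jms := by
            rw [← Finset.sum_mul, h1, one_mul]
          rw [hJδms δ]
          conv_lhs => rw [hJmsum]
          rw [← Finset.sum_sub_distrib]
      _ = ∑ i, (β * (Jδmu δ - Jmu) * (πδ δ i * (2 * r i - Jδmu δ - Jmu))
            + δ * (πδ δ i * ((r' i - β * (r' i - Jδmu δ) ^ 2)
                - (r i - β * (r i - Jδmu δ) ^ 2)))
            + (πδ δ i * g i - πδ δ i * ∑ j, P i j * g j)) :=
          Finset.sum_congr rfl fun i _ => by linear_combination (πδ δ i) * hpt i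
      _ = β * (Jδmu δ - Jmu) * A δ + δ * B δ
            + ((∑ i, πδ δ i * g i) - ∑ i, πδ δ i * ∑ j, P i j * g j) := by
          rw [Finset.sum_add_distrib, Finset.sum_add_distrib, Finset.sum_sub_distrib,
            ← Finset.mul_sum, ← Finset.mul_sum]
      _ = β * (Jδmu δ - Jmu) * A δ + δ * (B δ + C δ) := by rw [hsum1]; ring
  -- the divided identity, eventually
  have keydiv : (fun δ => (Jδms δ - Jms) / δ)
      =ᶠ[𝓝[>] (0:ℝ)] fun δ => β * ((Jδmu δ - Jmu) / δ) * A δ + (B δ + C δ) := by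
    filter_upwards [hIoc] with δ hδ
    have hne : δ ≠ 0 := ne_of_gt hδ.1
    rw [key δ hδ]
    field_simp
  -- limits of A, B, C
  have hAlim : Tendsto A (𝓝[>] (0:ℝ)) (𝓝 (∑ i, π i * (2 * r i - Jmu - Jmu))) :=
    tendsto_finset_sum _ fun i _ =>
      (hπδtend i).mul ((tendsto_const_nhds.sub hJtend).sub tendsto_const_nhds)
  have hBlim : Tendsto B (𝓝[>] (0:ℝ)) (𝓝 (∑ i, π i *
      ((r' i - β * (r' i - Jmu) ^ 2) - (r i - β * (r i - Jmu) ^ 2)))) :=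
    tendsto_finset_sum _ fun i _ =>
      (hπδtend i).mul
        ((tendsto_const_nhds.sub (tendsto_const_nhds.mul
            ((tendsto_const_nhds.sub hJtend).pow 2))).sub
          (tendsto_const_nhds.sub (tendsto_const_nhds.mul
            ((tendsto_const_nhds.sub hJtend).pow 2))))
  have hClim : Tendsto C (𝓝[>] (0:ℝ))
      (𝓝 (∑ i, π i * (∑ j, (P' i j - P i j) * g j))) :=
    tendsto_finset_sum _ fun i _ => (hπδtend i).mul_const _
  have hF : Tendsto (fun δ => β * ((Jδmu δ - Jmu) / δ) * A δ + (B δ + C δ))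
      (𝓝[>] (0:ℝ))
      (𝓝 (β * L * (∑ i, π i * (2 * r i - Jmu - Jmu))
        + ((∑ i, π i * ((r' i - β * (r' i - Jmu) ^ 2) - (r i - β * (r i - Jmu) ^ 2)))
          + ∑ i, π i * (∑ j, (P' i j - P i j) * g j)))) :=
    (((tendsto_const_nhds.mul hL).mul hAlim)).add (hBlim.add hClim)
  have hA0 : ∑ i, π i * (2 * r i - Jmu - Jmu) = 0 := by
    have : ∑ i, π i * (2 * r i - Jmu - Jmu)
        = 2 * (∑ i, π i * r i) - 2 * Jmu * (∑ i, π i) := by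
      rw [Finset.mul_sum, Finset.mul_sum, ← Finset.sum_sub_distrib]
      exact Finset.sum_congr rfl fun i _ => by ring
    rw [this, ← hJmu, hπ1]; ring
  have hT : ∑ i, π i * ((∑ j, (P' i j - P i j) * g j)
        + r' i - β * (r' i - Jmu) ^ 2 - r i + β * (r i - Jmu) ^ 2)
      = β * L * (∑ i, π i * (2 * r i - Jmu - Jmu))
        + ((∑ i, π i * ((r' i - β * (r' i - Jmu) ^ 2) - (r i - β * (r i - Jmu) ^ 2)))
          + ∑ i, π i * (∑ j, (P' i j - P i j) * g j)) := by
    rw [hA0, mul_zero, zero_add, ← Finset.sum_add_distrib]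
    exact Finset.sum_congr rfl fun i _ => by ring
  rw [hT]
  exact hF.congr' keydiv.symm
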